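/- Let K be a field of characteristic 2 with an endomorphism θ satisfying (x^θ)^θ = x² for all x, and let ν : K* → ℝ be a valuation (ν(ab) = ν(a) + ν(b), ν(a+b) ≥ min{ν(a),ν(b)}) which is θ-invariant, i.e. ν(x^θ) = √2·ν(x) for all x ∈ K*. Define R(s,t) = t^{θ+2} + st + s^θ (where t^{θ+2} means t^θ·t²). Then for all (s,t) ≠ (0,0): ν(R(s,t)) = min{√2·ν(s), (√2+2)·ν(t)} (with the convention ν(0) = +∞). -/

import Mathlib

/-- For a field `K` of characteristic 2 with Tits endomorphism `θ` and a `θ`-invariant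
valuation `ν` (with `ν(0) = ⊤`), the Suzuki norm `R(s,t) = t^{θ+2} + st + s^θ` satisfies
`ν(R(s,t)) = min{√2·ν(s), (√2+2)·ν(t)}` for all `(s,t) ≠ (0,0)`. -/
theorem stmt8 {K : Type*} [Field K] [CharP K 2]
    (θ : K →+* K) (hθ : ∀ x, θ (θ x) = x ^ 2)
    (ν : K → EReal) (hν0 : ν 0 = ⊤)
    (hνtop : ∀ x : K, x ≠ 0 → ν x ≠ ⊤) (hνbot : ∀ x : K, ν x ≠ ⊥)
    (hνmul : ∀ a b : K, ν (a * b) = ν a + ν b)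
    (hνadd : ∀ a b : K, min (ν a) (ν b) ≤ ν (a + b))
    (hνθ : ∀ x : K, ν (θ x) = ((Real.sqrt 2 : ℝ) : EReal) * ν x)
    (s t : K) (hst : ¬(s = 0 ∧ t = 0)) :
    ν (θ t * t ^ 2 + s * t + θ s)
      = min (((Real.sqrt 2 : ℝ) : EReal) * ν s)
          ((((Real.sqrt 2 + 2 : ℝ)) : EReal) * ν t) := by
  set r := Real.sqrt 2 with hrdef
  have hr2 : r * r = 2 := Real.mul_self_sqrt (by norm_num)
  have hr1 : 1 < r := by
    have : Real.sqrt 1 < Real.sqrt 2 := Real.sqrt_lt_sqrt (by norm_num) (by norm_num)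
    simpa using this
  have hr0 : 0 < r := lt_trans one_pos hr1
  have h2K : (2 : K) = 0 := by
    have := CharP.cast_eq_zero K 2; exact_mod_cast this
  have hfin' : ∀ e : EReal, e ≠ ⊤ → e ≠ ⊥ → ∃ c : ℝ, e = (c : EReal) := by
    intro e het heb
    induction e using EReal.rec with
    | bot => exact absurd rfl heb
    | coe c => exact ⟨c, rfl⟩
    | top => exact absurd rfl het
  have hfin : ∀ x : K, x ≠ 0 → ∃ c : ℝ, ν x = (c : EReal) :=
    fun x hx => hfin' (ν x) (hνtop x hx) (hνbot x)
  have hν1 : ν 1 = 0 := by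
    obtain ⟨c, hc⟩ := hfin 1 one_ne_zero
    have h := hνmul 1 1
    rw [one_mul, hc] at h
    have h' : c = c + c := by exact_mod_cast h
    have : c = 0 := by linarith
    rw [hc, this]; rfl
  have hinv : ∀ (x : K) (c : ℝ), x ≠ 0 → ν x = (c : EReal) → ν x⁻¹ = ((-c : ℝ) : EReal) := by
    intro x c hx hc
    obtain ⟨d, hd⟩ := hfin x⁻¹ (inv_ne_zero hx)
    have h := hνmul x x⁻¹
    rw [mul_inv_cancel₀ hx, hν1, hc, hd] at h
    have h' : (0 : ℝ) = c + d := by exact_mod_cast h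
    rw [hd]; norm_cast; linarith
  have hlt : ∀ x y : K, ν x < ν y → ν (x + y) = ν x := by
    intro x y h
    have h1 : min (ν x) (ν y) ≤ ν (x + y) := hνadd x y
    rw [min_eq_left h.le] at h1
    refine le_antisymm ?_ h1
    by_contra hcon
    push_neg at hcon
    have hxy : x + y + y = x := by linear_combination y * h2K
    have h3 := hνadd (x + y) y
    rw [hxy] at h3
    exact absurd h3 (not_le.mpr (lt_min_iff.mpr ⟨hcon, h⟩))
  by_cases ht : t = 0
  · have hs : s ≠ 0 := fun h => hst ⟨h, ht⟩
    subst ht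
    obtain ⟨a, ha⟩ := hfin s hs
    have he : θ (0 : K) * (0 : K) ^ 2 + s * 0 + θ s = θ s := by simp
    rw [he, hνθ s, hν0, EReal.coe_mul_top_of_pos (by linarith : (0:ℝ) < r + 2)]
    exact (min_eq_left le_top).symm
  by_cases hs : s = 0
  · subst hs
    obtain ⟨b, hb⟩ := hfin t ht
    have he : θ t * t ^ 2 + (0 : K) * t + θ 0 = θ t * t ^ 2 := by simp
    rw [he, hν0, EReal.coe_mul_top_of_pos hr0]
    rw [min_eq_right le_top]
    rw [hνmul, hνθ, pow_two, hνmul, hb]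
    norm_cast; ring
  -- main case : both nonzero
  obtain ⟨a, ha⟩ := hfin s hs
  obtain ⟨b, hb⟩ := hfin t ht
  have hθs : θ s ≠ 0 := (map_ne_zero θ).mpr hs
  have hθt : θ t ≠ 0 := (map_ne_zero θ).mpr ht
  have hA : ν (θ t * t ^ 2) = (((r + 2) * b : ℝ) : EReal) := by
    rw [hνmul, hνθ, pow_two, hνmul, hb]; norm_cast; ring
  have hB : ν (s * t) = ((a + b : ℝ) : EReal) := by
    rw [hνmul, ha, hb]; norm_cast
  have hC : ν (θ s) = ((r * a : ℝ) : EReal) := by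
    rw [hνθ, ha]; norm_cast
  have hRHS : min (((r : ℝ) : EReal) * ν s) (((r + 2 : ℝ) : EReal) * ν t)
      = ((min (r * a) ((r + 2) * b) : ℝ) : EReal) := by
    rw [ha, hb, ← EReal.coe_mul, ← EReal.coe_mul]
    exact (EReal.coe_strictMono.monotone.map_min).symm
  rw [hRHS]
  rcases lt_trichotomy (r * a) ((r + 2) * b) with h | h | h
  · -- min is √2 a, attained by θ s
    have hkey : r * a < a + b := by
      by_contra hcon
      push_neg at hcon
      have h1 : (r + 2) * (a + b) ≤ (r + 2) * (r * a) :=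
        mul_le_mul_of_nonneg_left hcon (by linarith)
      have hra : r * (r * a) = 2 * a := by rw [← mul_assoc, hr2]
      nlinarith [h, h1, hra]
    have h1 : ν (θ s) < ν (θ t * t ^ 2 + s * t) := by
      refine lt_of_lt_of_le ?_ (hνadd _ _)
      rw [hA, hB, hC]
      exact lt_min_iff.mpr ⟨by exact_mod_cast h, by exact_mod_cast hkey⟩
    have he : θ t * t ^ 2 + s * t + θ s = θ s + (θ t * t ^ 2 + s * t) := by ring
    rw [he, hlt _ _ h1, hC, min_eq_left h.le]
  · -- boundary case
    have hab : a = (1 + r) * b := by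
      have hrne : r ≠ 0 := ne_of_gt hr0
      apply mul_left_cancel₀ hrne
      linear_combination h - b * hr2
    have hA' : ν (θ t * t ^ 2) = ((r * a : ℝ) : EReal) := by rw [hA, h]
    have hB' : ν (s * t) = ((r * a : ℝ) : EReal) := by
      rw [hB]; norm_cast
      linear_combination (1 - r) * hab - b * hr2
    set u : K := t * θ t * s⁻¹ with hudef
    have hune : u ≠ 0 := by
      apply mul_ne_zero (mul_ne_zero ht hθt) (inv_ne_zero hs)
    have hsinv : ν s⁻¹ = ((-a : ℝ) : EReal) := hinv s a hs ha
    have hu0 : ν u = 0 := by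
      rw [hudef, hνmul, hνmul, hb, hνθ, hb, hsinv]
      norm_cast; nlinarith [hab]
    have hθu0 : ν (θ u) = 0 := by rw [hνθ, hu0, mul_zero]
    have hθune : θ u ≠ 0 := (map_ne_zero θ).mpr hune
    have hθuinv : ν (θ u)⁻¹ = 0 := by
      have := hinv (θ u) 0 hθune (by rw [hθu0]; rfl)
      simpa using this
    set w : K := u + 1 + u * (θ u)⁻¹ with hwdef
    have hθuexp : θ u = θ t * t ^ 2 * (θ s)⁻¹ := by
      rw [hudef, map_mul, map_mul, map_inv₀, hθ t]
    have hR : θ t * t ^ 2 + s * t + θ s = s * t * w := by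
      rw [hwdef, hudef, hθuexp]
      field_simp [hs, ht, hθs, hθt]
    have hνR : ν (θ t * t ^ 2 + s * t + θ s) = ((r * a : ℝ) : EReal) + ν w := by
      rw [hR, hνmul, hB']
    -- ν w ≥ 0
    have hw1 : (0 : EReal) ≤ ν w := by
      have huinv : ν (u * (θ u)⁻¹) = 0 := by rw [hνmul, hu0, hθuinv]; simp
      have h1 : (0 : EReal) ≤ ν (u + 1) := by
        have := hνadd u 1
        rwa [hu0, hν1, min_self] at this
      have h2 := hνadd (u + 1) (u * (θ u)⁻¹)
      rw [huinv] at h2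
      exact le_trans (le_min h1 le_rfl) h2
    -- ν w ≤ 0
    have hw2 : ν w ≤ 0 := by
      by_contra hcon
      push_neg at hcon
      set P : K := w * θ u with hPdef
      have hPpos : (0 : EReal) < ν P := by
        rw [hPdef, hνmul, hθu0, add_zero]; exact hcon
      have hPid : P = u * θ u + θ u + u := by
        rw [hPdef, hwdef]
        field_simp
      have hθP : θ P = θ u * u ^ 2 + u ^ 2 + θ u := by
        rw [hPid, map_add, map_add, map_mul, hθ u]
      have hUid : u = (u + 1) * P + θ P := by
        rw [hθP, hPid]
        linear_combination (-(u ^ 2 * θ u + u * θ u + u ^ 2 + θ u)) * h2K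
      have h1 : (0 : EReal) < ν ((u + 1) * P) := by
        rw [hνmul]
        have hup : (0 : EReal) ≤ ν (u + 1) := by
          have := hνadd u 1
          rwa [hu0, hν1, min_self] at this
        calc (0 : EReal) < ν P := hPpos
          _ = 0 + ν P := (zero_add _).symm
          _ ≤ ν (u + 1) + ν P := add_le_add_left hup _
      have h2 : (0 : EReal) < ν (θ P) := by
        rw [hνθ]
        exact EReal.mul_pos (by exact_mod_cast hr0) hPpos
      have h3 := hνadd ((u + 1) * P) (θ P)
      rw [← hUid, hu0] at h3
      exact absurd h3 (not_le.mpr (lt_min_iff.mpr ⟨h1, h2⟩))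
    have hw : ν w = 0 := le_antisymm hw2 hw1
    rw [hνR, hw, add_zero, ← h, min_self]
  · -- min is (√2+2) b, attained by θt t²
    have hkey : (r + 2) * b < a + b := by
      by_contra hcon
      push_neg at hcon
      have h1 : (r + 2) * (a + b) ≤ (r + 2) * ((r + 2) * b) :=
        mul_le_mul_of_nonneg_left hcon (by linarith)
      have hrb : r * (r * b) = 2 * b := by rw [← mul_assoc, hr2]
      nlinarith [h, h1, hrb]
    have h1 : ν (θ t * t ^ 2) < ν (s * t + θ s) := by
      refine lt_of_lt_of_le ?_ (hνadd _ _)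
      rw [hA, hB, hC]
      exact lt_min_iff.mpr ⟨by exact_mod_cast hkey, by exact_mod_cast h⟩
    rw [add_assoc, hlt _ _ h1, hA, min_eq_right h.le]
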